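/- Robust policy gradient, subgradient part: under Assumption 1, for every probability distribution ρ on S, every θ ∈ Θ, and every choice of maximizing state s_θ, the vector ψ_ρ(θ) is a Fréchet subgradient of J_ρ at θ (relative to Θ). -/

import Mathlib

set_option autoImplicit false

open Finset

/-- The stochastic matrix of a policy `π` under the kernel `p`:
`P_π(s,s') = ∑ a, π(a|s)·p(s'|s,a)`. -/
noncomputable def pmat {S A : Type*} [Fintype A] (π : S → A → ℝ) (p : S → A → S → ℝ) :
    Matrix S S ℝ :=
  Matrix.of fun s s' => ∑ a, π s a * p s a s'

/-- The discounted visitation distribution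
`d^π_s(s') = (1-γ+γR)·∑_{t≥0} (γ(1-R))^t·(P_π^t)(s,s')`. -/
noncomputable def dvisit {S A : Type*} [Fintype S] [Fintype A] [DecidableEq S]
    (γ R : ℝ) (π : S → A → ℝ) (p : S → A → S → ℝ) (s s' : S) : ℝ :=
  (1 - γ + γ * R) * ∑' t : ℕ, (γ * (1 - R)) ^ t * ((pmat π p) ^ t) s s'

/-- `u` is a Fréchet subgradient of `f` at `x` relative to `Θ`:
`liminf_{h→0, h≠0, x+h∈Θ} (f(x+h) - f(x) - ⟨h,u⟩)/‖h‖ ≥ 0`, expressed in ε-δ form. -/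
def IsFrechetSubgradientWithin {E : Type*} [NormedAddCommGroup E] [InnerProductSpace ℝ E]
    (f : E → ℝ) (Θ : Set E) (x u : E) : Prop :=
  ∀ ε > (0 : ℝ), ∃ δ > (0 : ℝ), ∀ h : E, h ≠ 0 → ‖h‖ < δ → x + h ∈ Θ →
    -ε * ‖h‖ ≤ f (x + h) - f x - (inner ℝ h u : ℝ)

set_option linter.unusedSectionVars false

section Aux

variable {S : Type*} [Fintype S] [DecidableEq S]

lemma pow_nonneg_rowsum (P : Matrix S S ℝ) (h0 : ∀ s s', 0 ≤ P s s')
    (h1 : ∀ s, ∑ s', P s s' = 1) :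
    ∀ t : ℕ, (∀ s s', 0 ≤ (P ^ t) s s') ∧ (∀ s, ∑ s', (P ^ t) s s' = 1) := by
  intro t
  induction t with
  | zero =>
    constructor
    · intro s s'
      simp [Matrix.one_apply]
      split <;> norm_num
    · intro s
      simp [Matrix.one_apply]
  | succ t ih =>
    rw [pow_succ]
    constructor
    · intro s s'
      rw [Matrix.mul_apply]
      exact Finset.sum_nonneg fun i _ => mul_nonneg (ih.1 s i) (h0 i s')
    · intro s
      simp only [Matrix.mul_apply]
      rw [Finset.sum_comm]
      simp_rw [← Finset.mul_sum]
      simp_rw [h1]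
      simpa using ih.2 s

lemma matpow_le_one (P : Matrix S S ℝ) (h0 : ∀ s s', 0 ≤ P s s')
    (h1 : ∀ s, ∑ s', P s s' = 1) (t : ℕ) (s s' : S) : (P ^ t) s s' ≤ 1 := by
  have h := pow_nonneg_rowsum P h0 h1 t
  calc (P ^ t) s s' ≤ ∑ x, (P ^ t) s x :=
        Finset.single_le_sum (fun x _ => h.1 s x) (Finset.mem_univ s')
    _ = 1 := h.2 s

/-- Entries of the Neumann series `∑ β^t P^t`. -/
noncomputable def neumann (β : ℝ) (P : Matrix S S ℝ) (s s' : S) : ℝ :=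
  ∑' t : ℕ, β ^ t * (P ^ t) s s'

variable {β : ℝ} {P : Matrix S S ℝ}
variable (hβ0 : 0 ≤ β) (hβ1 : β < 1)
  (h0 : ∀ s s', 0 ≤ P s s') (h1 : ∀ s, ∑ s', P s s' = 1)

include hβ0 hβ1 h0 h1

lemma neumann_summable (s s' : S) : Summable (fun t : ℕ => β ^ t * (P ^ t) s s') := by
  apply Summable.of_nonneg_of_le
    (fun t => mul_nonneg (pow_nonneg hβ0 t) ((pow_nonneg_rowsum P h0 h1 t).1 s s'))
    (fun t => ?_) (summable_geometric_of_lt_one hβ0 hβ1)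
  calc β ^ t * (P ^ t) s s' ≤ β ^ t * 1 :=
        mul_le_mul_of_nonneg_left (matpow_le_one P h0 h1 t s s') (pow_nonneg hβ0 t)
    _ = β ^ t := mul_one _

omit hβ1 in
lemma neumann_nonneg (s s' : S) : 0 ≤ neumann β P s s' :=
  tsum_nonneg fun t => mul_nonneg (pow_nonneg hβ0 t) ((pow_nonneg_rowsum P h0 h1 t).1 s s')

lemma neumann_le (s s' : S) : neumann β P s s' ≤ (1 - β)⁻¹ := by
  have := Summable.tsum_le_tsum (f := fun t : ℕ => β ^ t * (P ^ t) s s') (g := fun t : ℕ => β ^ t)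
    (fun t => by
      calc β ^ t * (P ^ t) s s' ≤ β ^ t * 1 :=
            mul_le_mul_of_nonneg_left (matpow_le_one P h0 h1 t s s') (pow_nonneg hβ0 t)
        _ = β ^ t := mul_one _)
    (neumann_summable hβ0 hβ1 h0 h1 s s') (summable_geometric_of_lt_one hβ0 hβ1)
  calc neumann β P s s' ≤ ∑' t : ℕ, β ^ t := this
    _ = (1 - β)⁻¹ := tsum_geometric_of_lt_one hβ0 hβ1

lemma neumann_eq (s s' : S) :
    neumann β P s s' = (if s = s' then 1 else 0) + β * ∑ s'', P s s'' * neumann β P s'' s' := by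
  have hsum := neumann_summable hβ0 hβ1 h0 h1 s s'
  have h := Summable.tsum_eq_zero_add hsum
  rw [neumann, h]
  congr 1
  · simp [Matrix.one_apply]
  · have : ∀ t : ℕ, β ^ (t + 1) * (P ^ (t + 1)) s s'
        = ∑ s'', β * (P s s'' * (β ^ t * (P ^ t) s'' s')) := by
      intro t
      rw [pow_succ' P t, Matrix.mul_apply, Finset.mul_sum]
      congr 1; ext s''; ring
    rw [tsum_congr this, Summable.tsum_finsetSum (fun s'' _ =>
      (((neumann_summable hβ0 hβ1 h0 h1 s'' s').mul_left (P s s'')).mul_left β))]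
    rw [Finset.mul_sum]
    congr 1; ext s''
    rw [tsum_mul_left, tsum_mul_left]; rfl

lemma neumann_rowsum (s : S) : ∑ s', neumann β P s s' = (1 - β)⁻¹ := by
  unfold neumann
  rw [← Summable.tsum_finsetSum (fun s' _ => neumann_summable hβ0 hβ1 h0 h1 s s')]
  have : ∀ t : ℕ, ∑ s', β ^ t * (P ^ t) s s' = β ^ t := by
    intro t
    rw [← Finset.mul_sum, (pow_nonneg_rowsum P h0 h1 t).2 s, mul_one]
  rw [tsum_congr this, tsum_geometric_of_lt_one hβ0 hβ1]

end Aux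


section Core
variable {S A : Type*} [Fintype S] [Fintype A] [DecidableEq S]

lemma pmat_nonneg (π : S → A → ℝ) (p : S → A → S → ℝ)
    (hπ : ∀ s, π s ∈ stdSimplex ℝ A) (hp : ∀ s a, p s a ∈ stdSimplex ℝ S) (s s' : S) :
    0 ≤ pmat π p s s' :=
  Finset.sum_nonneg fun a _ => mul_nonneg ((hπ s).1 a) ((hp s a).1 s')

lemma pmat_rowsum (π : S → A → ℝ) (p : S → A → S → ℝ)
    (hπ : ∀ s, π s ∈ stdSimplex ℝ A) (hp : ∀ s a, p s a ∈ stdSimplex ℝ S) (s : S) :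
    ∑ s', pmat π p s s' = 1 := by
  unfold pmat
  simp only [Matrix.of_apply]
  rw [Finset.sum_comm]
  simp_rw [← Finset.mul_sum]
  calc ∑ a, π s a * ∑ s', p s a s' = ∑ a, π s a * 1 := by
        apply Finset.sum_congr rfl; intro a _; rw [(hp s a).2]
    _ = 1 := by simp [(hπ s).2]

/-- expected cost of policy `π` -/
noncomputable def cpol (π : S → A → ℝ) (c : S → A → ℝ) (s : S) : ℝ := ∑ a, π s a * c s a

/-- `u = N c_π` where `N` is the Neumann series of `γ(1-R)·P_π`. -/
noncomputable def uval (γ R : ℝ) (π : S → A → ℝ) (p : S → A → S → ℝ) (c : S → A → ℝ)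
    (s : S) : ℝ :=
  ∑ s', neumann (γ * (1 - R)) (pmat π p) s s' * cpol π c s'

/-- the frozen-maximum value function -/
noncomputable def Gval (γ R : ℝ) (π : S → A → ℝ) (p : S → A → S → ℝ) (c : S → A → ℝ)
    (sθ : S) (s : S) : ℝ :=
  uval γ R π p c s + (γ * R / (1 - γ)) * uval γ R π p c sθ

lemma uval_eq (γ R : ℝ) (hγ : γ ∈ Set.Ico (0:ℝ) 1) (hR : R ∈ Set.Icc (0:ℝ) 1)
    (π : S → A → ℝ) (p : S → A → S → ℝ) (c : S → A → ℝ)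
    (hπ : ∀ s, π s ∈ stdSimplex ℝ A) (hp : ∀ s a, p s a ∈ stdSimplex ℝ S) (s : S) :
    uval γ R π p c s
      = ∑ a, π s a * (c s a + γ * (1 - R) * ∑ s', p s a s' * uval γ R π p c s') := by
  have hβ0 : 0 ≤ γ * (1 - R) := mul_nonneg hγ.1 (by linarith [hR.2])
  have hβ1 : γ * (1 - R) < 1 := by nlinarith [hγ.1, hγ.2, hR.1, hR.2]
  have h0 := pmat_nonneg π p hπ hp
  have h1 := pmat_rowsum π p hπ hp
  have step : uval γ R π p c s
      = cpol π c s + γ * (1 - R) * ∑ s'', pmat π p s s'' * uval γ R π p c s'' := by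
    unfold uval
    rw [Finset.sum_congr rfl (fun s' (_ : s' ∈ univ) => by
      rw [neumann_eq hβ0 hβ1 h0 h1 s s', add_mul])]
    rw [Finset.sum_add_distrib]
    congr 1
    · simp [ite_mul]
    · rw [Finset.sum_congr rfl (fun x (_ : x ∈ univ) => by
        rw [Finset.mul_sum, Finset.sum_mul] :
        ∀ x ∈ univ, (γ * (1 - R) * ∑ s'', pmat π p s s''
            * neumann (γ * (1 - R)) (pmat π p) s'' x) * cpol π c x
          = ∑ s'', γ * (1 - R) * (pmat π p s s''
            * neumann (γ * (1 - R)) (pmat π p) s'' x) * cpol π c x)]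
      rw [Finset.sum_comm, Finset.mul_sum]
      apply Finset.sum_congr rfl; intro s'' _
      rw [Finset.mul_sum, Finset.mul_sum]
      apply Finset.sum_congr rfl; intro x _
      ring
  rw [step]
  unfold cpol pmat
  simp only [Matrix.of_apply]
  simp_rw [mul_add, Finset.sum_add_distrib]
  congr 1
  simp_rw [Finset.sum_mul, Finset.mul_sum]
  rw [Finset.sum_comm]
  apply Finset.sum_congr rfl; intro a _
  apply Finset.sum_congr rfl; intro i _
  ring

lemma Gval_fixed (γ R : ℝ) (hγ : γ ∈ Set.Ico (0:ℝ) 1) (hR : R ∈ Set.Icc (0:ℝ) 1)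
    (π : S → A → ℝ) (p : S → A → S → ℝ) (c : S → A → ℝ)
    (hπ : ∀ s, π s ∈ stdSimplex ℝ A) (hp : ∀ s a, p s a ∈ stdSimplex ℝ S) (sθ s : S) :
    Gval γ R π p c sθ s = ∑ a, π s a * (c s a
      + γ * (1 - R) * ∑ s', p s a s' * Gval γ R π p c sθ s'
      + γ * R * Gval γ R π p c sθ sθ) := by
  have h1γ : (0:ℝ) < 1 - γ := by linarith [hγ.2]
  set u := uval γ R π p c with hu
  set κ := (γ * R / (1 - γ)) * u sθ with hκ
  have hG : ∀ s', Gval γ R π p c sθ s' = u s' + κ := fun s' => rfl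
  have key : ∀ a, (c s a
        + γ * (1 - R) * ∑ s', p s a s' * Gval γ R π p c sθ s'
        + γ * R * Gval γ R π p c sθ sθ)
      = (c s a + γ * (1 - R) * ∑ s', p s a s' * u s') + (γ * κ + γ * R * u sθ) := by
    intro a
    have : ∑ s', p s a s' * Gval γ R π p c sθ s' = (∑ s', p s a s' * u s') + κ := by
      rw [Finset.sum_congr rfl (fun s' (_ : s' ∈ univ) => by rw [hG s', mul_add]),
        Finset.sum_add_distrib, ← Finset.sum_mul, (hp s a).2, one_mul]
    rw [this, hG sθ]
    ring
  rw [Finset.sum_congr rfl (fun a (_ : a ∈ univ) => by rw [key a, mul_add]),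
    Finset.sum_add_distrib, ← Finset.sum_mul, (hπ s).2, one_mul]
  have hγκ : γ * κ + γ * R * u sθ = κ := by
    rw [hκ]; field_simp; ring
  rw [hγκ, hG s, ← uval_eq γ R hγ hR π p c hπ hp s]


lemma frozen_le_robust [Nonempty S] (γ R : ℝ) (hγ : γ ∈ Set.Ico (0:ℝ) 1)
    (hR : R ∈ Set.Icc (0:ℝ) 1)
    (π : S → A → ℝ) (p : S → A → S → ℝ) (c : S → A → ℝ)
    (hπ : ∀ s, π s ∈ stdSimplex ℝ A) (hp : ∀ s a, p s a ∈ stdSimplex ℝ S) (sθ : S)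
    (Vf Gf : S → ℝ)
    (hVf : ∀ s, Vf s = ∑ a, π s a * (c s a + γ * (1 - R) * ∑ s', p s a s' * Vf s'
      + γ * R * univ.sup' univ_nonempty Vf))
    (hGf : ∀ s, Gf s = ∑ a, π s a * (c s a + γ * (1 - R) * ∑ s', p s a s' * Gf s'
      + γ * R * Gf sθ)) :
    ∀ s, Gf s ≤ Vf s := by
  have hβ0 : 0 ≤ γ * (1 - R) := mul_nonneg hγ.1 (by linarith [hR.2])
  have hγR : 0 ≤ γ * R := mul_nonneg hγ.1 hR.1
  obtain ⟨sm, -, hmin⟩ := Finset.exists_min_image Finset.univ (fun s => Vf s - Gf s)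
    univ_nonempty
  have hmin' : ∀ s, Vf sm - Gf sm ≤ Vf s - Gf s := fun s => hmin s (mem_univ s)
  set Wm := Vf sm - Gf sm with hWm
  have key : ∀ s, γ * Wm ≤ Vf s - Gf s := by
    intro s
    rw [hVf s, hGf s, ← Finset.sum_sub_distrib]
    have term : ∀ a, π s a * (γ * Wm)
        ≤ π s a * (c s a + γ * (1 - R) * ∑ s', p s a s' * Vf s'
            + γ * R * univ.sup' univ_nonempty Vf)
          - π s a * (c s a + γ * (1 - R) * ∑ s', p s a s' * Gf s' + γ * R * Gf sθ) := by
      intro a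
      rw [← mul_sub]
      apply mul_le_mul_of_nonneg_left _ ((hπ s).1 a)
      have hsum : Wm ≤ ∑ s', p s a s' * Vf s' - ∑ s', p s a s' * Gf s' := by
        rw [← Finset.sum_sub_distrib]
        calc Wm = ∑ s', p s a s' * Wm := by
              rw [← Finset.sum_mul, (hp s a).2, one_mul]
          _ ≤ ∑ s', (p s a s' * Vf s' - p s a s' * Gf s') := by
              apply Finset.sum_le_sum; intro s' _
              rw [← mul_sub]
              exact mul_le_mul_of_nonneg_left (hmin' s') ((hp s a).1 s')
      have hsup : Wm ≤ univ.sup' univ_nonempty Vf - Gf sθ := by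
        calc Wm ≤ Vf sθ - Gf sθ := hmin' sθ
          _ ≤ univ.sup' univ_nonempty Vf - Gf sθ := by
              have := Finset.le_sup' Vf (Finset.mem_univ sθ)
              linarith
      nlinarith [mul_le_mul_of_nonneg_left hsum hβ0, mul_le_mul_of_nonneg_left hsup hγR]
    calc γ * Wm = ∑ a, π s a * (γ * Wm) := by
          rw [← Finset.sum_mul, (hπ s).2, one_mul]
      _ ≤ _ := Finset.sum_le_sum fun a _ => term a
  have h0 : 0 ≤ Wm := by
    have := key sm
    nlinarith [hγ.2]
  intro s
  have := hmin' s
  linarith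

lemma khat_eq (γ R : ℝ) (hγ : γ ∈ Set.Ico (0:ℝ) 1) (hR : R ∈ Set.Icc (0:ℝ) 1)
    (π : S → A → ℝ) (p : S → A → S → ℝ)
    (hπ : ∀ s, π s ∈ stdSimplex ℝ A) (hp : ∀ s a, p s a ∈ stdSimplex ℝ S) (sθ s s' : S) :
    neumann (γ * (1 - R)) (pmat π p) s s'
        + (γ * R / (1 - γ)) * neumann (γ * (1 - R)) (pmat π p) sθ s'
      = (if s = s' then 1 else 0)
        + γ * (1 - R) * ∑ s'', pmat π p s s''
            * (neumann (γ * (1 - R)) (pmat π p) s'' s'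
              + (γ * R / (1 - γ)) * neumann (γ * (1 - R)) (pmat π p) sθ s')
        + γ * R * (neumann (γ * (1 - R)) (pmat π p) sθ s'
              + (γ * R / (1 - γ)) * neumann (γ * (1 - R)) (pmat π p) sθ s') := by
  have hβ0 : 0 ≤ γ * (1 - R) := mul_nonneg hγ.1 (by linarith [hR.2])
  have hβ1 : γ * (1 - R) < 1 := by nlinarith [hγ.1, hγ.2, hR.1, hR.2]
  have h1γ : (0:ℝ) < 1 - γ := by linarith [hγ.2]
  have h0 := pmat_nonneg π p hπ hp
  have h1 := pmat_rowsum π p hπ hp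
  set n := neumann (γ * (1 - R)) (pmat π p) with hn
  have expand : ∑ s'', pmat π p s s'' * (n s'' s' + (γ * R / (1 - γ)) * n sθ s')
      = (∑ s'', pmat π p s s'' * n s'' s') + (γ * R / (1 - γ)) * n sθ s' := by
    rw [Finset.sum_congr rfl (fun s'' (_ : s'' ∈ univ) => mul_add _ _ _),
      Finset.sum_add_distrib]
    congr 1
    rw [← Finset.sum_mul, h1 s, one_mul]
  rw [expand]
  have hne := neumann_eq hβ0 hβ1 h0 h1 s s'
  rw [← hn] at hne
  rw [hne]
  set d := (if s = s' then (1:ℝ) else 0) with hd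
  field_simp
  ring



lemma khat_nonneg (γ R : ℝ) (hγ : γ ∈ Set.Ico (0:ℝ) 1) (hR : R ∈ Set.Icc (0:ℝ) 1)
    (π : S → A → ℝ) (p : S → A → S → ℝ)
    (hπ : ∀ s, π s ∈ stdSimplex ℝ A) (hp : ∀ s a, p s a ∈ stdSimplex ℝ S) (sθ s s' : S) :
    0 ≤ neumann (γ * (1 - R)) (pmat π p) s s'
        + (γ * R / (1 - γ)) * neumann (γ * (1 - R)) (pmat π p) sθ s' := by
  have hβ0 : 0 ≤ γ * (1 - R) := mul_nonneg hγ.1 (by linarith [hR.2])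
  have h1γ : (0:ℝ) < 1 - γ := by linarith [hγ.2]
  have h0 := pmat_nonneg π p hπ hp
  have h1 := pmat_rowsum π p hπ hp
  have n1 := neumann_nonneg hβ0 h0 h1 s s'
  have n2 := neumann_nonneg hβ0 h0 h1 sθ s'
  have : 0 ≤ γ * R / (1 - γ) := div_nonneg (mul_nonneg hγ.1 hR.1) h1γ.le
  positivity

lemma khat_le (γ R : ℝ) (hγ : γ ∈ Set.Ico (0:ℝ) 1) (hR : R ∈ Set.Icc (0:ℝ) 1)
    (π : S → A → ℝ) (p : S → A → S → ℝ)
    (hπ : ∀ s, π s ∈ stdSimplex ℝ A) (hp : ∀ s a, p s a ∈ stdSimplex ℝ S) (sθ s s' : S) :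
    neumann (γ * (1 - R)) (pmat π p) s s'
        + (γ * R / (1 - γ)) * neumann (γ * (1 - R)) (pmat π p) sθ s' ≤ (1 - γ)⁻¹ := by
  have hβ0 : 0 ≤ γ * (1 - R) := mul_nonneg hγ.1 (by linarith [hR.2])
  have hβ1 : γ * (1 - R) < 1 := by nlinarith [hγ.1, hγ.2, hR.1, hR.2]
  have h1γ : (0:ℝ) < 1 - γ := by linarith [hγ.2]
  have h1β : (0:ℝ) < 1 - γ * (1 - R) := by linarith
  have h0 := pmat_nonneg π p hπ hp
  have h1 := pmat_rowsum π p hπ hp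
  have n1 := neumann_le hβ0 hβ1 h0 h1 s s'
  have n2 := neumann_le hβ0 hβ1 h0 h1 sθ s'
  have hα : 0 ≤ γ * R / (1 - γ) := div_nonneg (mul_nonneg hγ.1 hR.1) h1γ.le
  have key : (1 + γ * R / (1 - γ)) * (1 - γ * (1 - R))⁻¹ = (1 - γ)⁻¹ := by
    field_simp
    ring
  calc neumann (γ * (1 - R)) (pmat π p) s s'
        + (γ * R / (1 - γ)) * neumann (γ * (1 - R)) (pmat π p) sθ s'
      ≤ (1 - γ * (1 - R))⁻¹ + (γ * R / (1 - γ)) * (1 - γ * (1 - R))⁻¹ := by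
        gcongr
    _ = (1 + γ * R / (1 - γ)) * (1 - γ * (1 - R))⁻¹ := by ring
    _ = (1 - γ)⁻¹ := key

lemma kapp_eq (γ R : ℝ) (hγ : γ ∈ Set.Ico (0:ℝ) 1) (hR : R ∈ Set.Icc (0:ℝ) 1)
    (π : S → A → ℝ) (p : S → A → S → ℝ)
    (hπ : ∀ s, π s ∈ stdSimplex ℝ A) (hp : ∀ s a, p s a ∈ stdSimplex ℝ S)
    (b : S → ℝ) (sθ s : S) :
    (∑ s', (neumann (γ * (1 - R)) (pmat π p) s s'
        + (γ * R / (1 - γ)) * neumann (γ * (1 - R)) (pmat π p) sθ s') * b s')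
      = b s
        + γ * (1 - R) * ∑ s'', pmat π p s s''
            * (∑ s', (neumann (γ * (1 - R)) (pmat π p) s'' s'
              + (γ * R / (1 - γ)) * neumann (γ * (1 - R)) (pmat π p) sθ s') * b s')
        + γ * R * (∑ s', (neumann (γ * (1 - R)) (pmat π p) sθ s'
              + (γ * R / (1 - γ)) * neumann (γ * (1 - R)) (pmat π p) sθ s') * b s') := by
  set n := neumann (γ * (1 - R)) (pmat π p) with hn
  set K : S → S → ℝ := fun x s' => n x s' + (γ * R / (1 - γ)) * n sθ s' with hK
  have hKe : ∀ x s', K x s' = (if x = s' then 1 else 0)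
      + γ * (1 - R) * ∑ s'', pmat π p x s'' * K s'' s' + γ * R * K sθ s' := by
    intro x s'
    exact khat_eq γ R hγ hR π p hπ hp sθ x s'
  calc ∑ s', K s s' * b s'
      = ∑ s', ((if s = s' then 1 else 0) * b s'
          + γ * (1 - R) * ∑ s'', pmat π p s s'' * (K s'' s' * b s')
          + γ * R * (K sθ s' * b s')) := by
        apply Finset.sum_congr rfl; intro s' _
        rw [hKe s s', add_mul, add_mul]
        congr 1
        · congr 1
          rw [Finset.mul_sum, Finset.sum_mul, Finset.mul_sum]
          apply Finset.sum_congr rfl; intro i _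
          ring
        · ring
    _ = b s + γ * (1 - R) * ∑ s'', pmat π p s s'' * (∑ s', K s'' s' * b s')
        + γ * R * ∑ s', K sθ s' * b s' := by
        rw [Finset.sum_add_distrib, Finset.sum_add_distrib]
        congr 1
        · congr 1
          · simp
          · rw [← Finset.mul_sum, Finset.sum_comm]
            congr 1
            apply Finset.sum_congr rfl; intro s'' _
            rw [Finset.mul_sum]
        · rw [← Finset.mul_sum]


end Core
set_option maxHeartbeats 1000000 in
/-- **Robust policy gradient, subgradient part (Theorem 1(2))**: under Assumption 1, for any
distribution `ρ` on `S`, any `θ ∈ Θ` and any state `s_θ` maximizing `V^{π_θ}`, the vector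
`ψ_ρ(θ) = (γR/((1-γ)(1-γ+γR)))·∑_s d^{π_θ}_{s_θ}(s)·∑_a ∇π_θ(a|s)·Q^{π_θ}(s,a)
  + (1/(1-γ+γR))·∑_s d^{π_θ}_ρ(s)·∑_a ∇π_θ(a|s)·Q^{π_θ}(s,a)`
is a Fréchet subgradient of `J_ρ` at `θ` relative to `Θ`. -/
theorem stmt_6 {S A : Type*} [Fintype S] [Fintype A] [Nonempty S] [Nonempty A] [DecidableEq S]
    {N : ℕ}
    (c : S → A → ℝ) (hc : ∀ s a, c s a ∈ Set.Icc (0 : ℝ) 1)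
    (γ : ℝ) (hγ : γ ∈ Set.Ico (0 : ℝ) 1)
    (R : ℝ) (hR : R ∈ Set.Icc (0 : ℝ) 1)
    (p : S → A → S → ℝ) (hp : ∀ s a, p s a ∈ stdSimplex ℝ S)
    (Θ : Set (EuclideanSpace ℝ (Fin N))) (hΘ : Convex ℝ Θ)
    (π : EuclideanSpace ℝ (Fin N) → S → A → ℝ)
    (hπ : ∀ θ ∈ Θ, ∀ s, π θ s ∈ stdSimplex ℝ A)
    (kπ : ℝ) (hkπ : 0 < kπ)
    (D : EuclideanSpace ℝ (Fin N) → S → A → EuclideanSpace ℝ (Fin N))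
    (hD : ∀ θ ∈ Θ, ∀ s a, HasGradientWithinAt (fun θ' => π θ' s a) (D θ s a) Θ θ)
    (hDb : ∀ θ ∈ Θ, ∀ s a, ‖D θ s a‖ ≤ kπ)
    (V : EuclideanSpace ℝ (Fin N) → S → ℝ)
    (hV : ∀ θ ∈ Θ, ∀ s, V θ s = ∑ a, π θ s a * (c s a
      + γ * (1 - R) * ∑ s', p s a s' * V θ s'
      + γ * R * univ.sup' univ_nonempty (V θ)))
    (Q : EuclideanSpace ℝ (Fin N) → S → A → ℝ)
    (hQ : ∀ θ ∈ Θ, ∀ s a, Q θ s a = c s a + γ * (1 - R) * ∑ s', p s a s' * V θ s'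
      + γ * R * univ.sup' univ_nonempty (V θ))
    (ρ : S → ℝ) (hρ : ρ ∈ stdSimplex ℝ S)
    (θ : EuclideanSpace ℝ (Fin N)) (hθ : θ ∈ Θ)
    (sθ : S) (hsθ : ∀ s, V θ s ≤ V θ sθ) :
    IsFrechetSubgradientWithin (fun θ' => ∑ s, ρ s * V θ' s) Θ θ
      ((γ * R / ((1 - γ) * (1 - γ + γ * R))) •
          ∑ s, ∑ a, (dvisit γ R (π θ) p sθ s * Q θ s a) • D θ s a
        + (1 / (1 - γ + γ * R)) •
          ∑ s, ∑ a, ((∑ s₀, ρ s₀ * dvisit γ R (π θ) p s₀ s) * Q θ s a) • D θ s a) := by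
  classical
  intro ε hε
  -- basic constants
  have h1γ : (0:ℝ) < 1 - γ := by linarith [hγ.2]
  have hβ0 : 0 ≤ γ * (1 - R) := mul_nonneg hγ.1 (by linarith [hR.2])
  have hβ1 : γ * (1 - R) < 1 := by nlinarith [hγ.1, hγ.2, hR.1, hR.2]
  have hγR : 0 ≤ γ * R := mul_nonneg hγ.1 hR.1
  have h1β : (0:ℝ) < 1 - γ + γ * R := by linarith
  have hsup : univ.sup' univ_nonempty (V θ) = V θ sθ :=
    le_antisymm (Finset.sup'_le _ _ fun s _ => hsθ s) (Finset.le_sup' _ (Finset.mem_univ sθ))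
  -- bounds on V θ
  have hVub : ∀ s, V θ s ≤ (1 - γ)⁻¹ := by
    obtain ⟨sM, -, hM⟩ := Finset.exists_max_image Finset.univ (V θ) univ_nonempty
    have hM' : ∀ s, V θ s ≤ V θ sM := fun s => hM s (Finset.mem_univ s)
    have hkey : V θ sM ≤ 1 + γ * V θ sM := by
      calc V θ sM = ∑ a, π θ sM a * (c sM a
            + γ * (1 - R) * ∑ s', p sM a s' * V θ s'
            + γ * R * univ.sup' univ_nonempty (V θ)) := hV θ hθ sM
        _ ≤ ∑ a, π θ sM a * (1 + γ * V θ sM) := by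
            apply Finset.sum_le_sum; intro a _
            apply mul_le_mul_of_nonneg_left _ (((hπ θ hθ) sM).1 a)
            have e1 : ∑ s', p sM a s' * V θ s' ≤ V θ sM := by
              calc ∑ s', p sM a s' * V θ s' ≤ ∑ s', p sM a s' * V θ sM := by
                    apply Finset.sum_le_sum; intro s' _
                    exact mul_le_mul_of_nonneg_left (hM' s') ((hp sM a).1 s')
                _ = V θ sM := by rw [← Finset.sum_mul, (hp sM a).2, one_mul]
            have e2 : univ.sup' univ_nonempty (V θ) ≤ V θ sM :=
              Finset.sup'_le _ _ fun s _ => hM' s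
            nlinarith [(hc sM a).2, mul_le_mul_of_nonneg_left e1 hβ0,
              mul_le_mul_of_nonneg_left e2 hγR]
        _ = 1 + γ * V θ sM := by
            rw [← Finset.sum_mul, ((hπ θ hθ) sM).2, one_mul]
    have : V θ sM ≤ (1 - γ)⁻¹ := by
      rw [inv_eq_one_div, le_div_iff₀ h1γ]
      nlinarith
    exact fun s => le_trans (hM' s) this
  have hVlb : ∀ s, 0 ≤ V θ s := by
    obtain ⟨sm, -, hm⟩ := Finset.exists_min_image Finset.univ (V θ) univ_nonempty
    have hm' : ∀ s, V θ sm ≤ V θ s := fun s => hm s (Finset.mem_univ s)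
    have hkey : γ * V θ sm ≤ V θ sm := by
      calc γ * V θ sm = ∑ a, π θ sm a * (γ * V θ sm) := by
            rw [← Finset.sum_mul, ((hπ θ hθ) sm).2, one_mul]
        _ ≤ ∑ a, π θ sm a * (c sm a
            + γ * (1 - R) * ∑ s', p sm a s' * V θ s'
            + γ * R * univ.sup' univ_nonempty (V θ)) := by
            apply Finset.sum_le_sum; intro a _
            apply mul_le_mul_of_nonneg_left _ (((hπ θ hθ) sm).1 a)
            have e1 : V θ sm ≤ ∑ s', p sm a s' * V θ s' := by
              calc V θ sm = ∑ s', p sm a s' * V θ sm := by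
                    rw [← Finset.sum_mul, (hp sm a).2, one_mul]
                _ ≤ ∑ s', p sm a s' * V θ s' := by
                    apply Finset.sum_le_sum; intro s' _
                    exact mul_le_mul_of_nonneg_left (hm' s') ((hp sm a).1 s')
            have e2 : V θ sm ≤ univ.sup' univ_nonempty (V θ) :=
              Finset.le_sup' _ (Finset.mem_univ sm)
            nlinarith [(hc sm a).1, mul_le_mul_of_nonneg_left e1 hβ0,
              mul_le_mul_of_nonneg_left e2 hγR]
        _ = V θ sm := (hV θ hθ sm).symm
    have h0 : 0 ≤ V θ sm := by nlinarith
    exact fun s => le_trans h0 (hm' s)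
  -- bounds on Q θ
  have hQub : ∀ s a, |Q θ s a| ≤ (1 - γ)⁻¹ := by
    intro s a
    have hpv0 : 0 ≤ ∑ s', p s a s' * V θ s' :=
      Finset.sum_nonneg fun s' _ => mul_nonneg ((hp s a).1 s') (hVlb s')
    have hpv1 : ∑ s', p s a s' * V θ s' ≤ (1 - γ)⁻¹ := by
      calc ∑ s', p s a s' * V θ s' ≤ ∑ s', p s a s' * (1 - γ)⁻¹ := by
            apply Finset.sum_le_sum; intro s' _
            exact mul_le_mul_of_nonneg_left (hVub s') ((hp s a).1 s')
        _ = (1 - γ)⁻¹ := by rw [← Finset.sum_mul, (hp s a).2, one_mul]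
    have hs0 : 0 ≤ univ.sup' univ_nonempty (V θ) := by rw [hsup]; exact hVlb sθ
    have hs1 : univ.sup' univ_nonempty (V θ) ≤ (1 - γ)⁻¹ := by rw [hsup]; exact hVub sθ
    have hginv : 1 + γ * (1 - γ)⁻¹ = (1 - γ)⁻¹ := by
      field_simp
      ring
    rw [hQ θ hθ s a, abs_le]
    constructor
    · have : (0:ℝ) ≤ (1 - γ)⁻¹ := by positivity
      nlinarith [(hc s a).1, mul_nonneg hβ0 hpv0, mul_nonneg hγR hs0]
    · nlinarith [(hc s a).2, mul_le_mul_of_nonneg_left hpv1 hβ0,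
        mul_le_mul_of_nonneg_left hs1 hγR]
  -- Lipschitz bound on π
  have hLip : ∀ θ' ∈ Θ, ∀ s a, |π θ' s a - π θ s a| ≤ kπ * ‖θ' - θ‖ := by
    intro θ' hθ' s a
    have key := Convex.norm_image_sub_le_of_norm_hasFDerivWithin_le
      (f := fun x => π x s a)
      (f' := fun x => (InnerProductSpace.toDual ℝ (EuclideanSpace ℝ (Fin N))) (D x s a))
      (fun x hx => (hD x hx s a).hasFDerivWithinAt)
      (fun x hx => by
        rw [LinearIsometryEquiv.norm_map]
        exact hDb x hx s a)
      hΘ hθ hθ'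
    simpa [Real.norm_eq_abs] using key
  -- cardinality constants
  set nS : ℝ := (Fintype.card S : ℝ) with hnS
  set nA : ℝ := (Fintype.card A : ℝ) with hnA
  have hnS1 : (1:ℝ) ≤ nS := by
    rw [hnS]; exact_mod_cast Fintype.card_pos
  have hnA1 : (1:ℝ) ≤ nA := by
    rw [hnA]; exact_mod_cast Fintype.card_pos
  set Qm : ℝ := (1 - γ)⁻¹ with hQm
  have hQm0 : 0 < Qm := by rw [hQm]; positivity
  set C₂ : ℝ := (nA * kπ) * (nS * Qm * (nA * kπ * Qm)) / (1 - γ) + 1 with hC₂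
  have hC₂0 : 0 < C₂ := by rw [hC₂]; positivity
  set c' : ℝ := ε / (2 * (nS * Qm * nA * Qm) + 1) with hc'
  have hc'0 : 0 < c' := by rw [hc']; positivity
  set δ₂ : ℝ := ε / (2 * C₂) with hδ₂
  have hδ₂0 : 0 < δ₂ := by rw [hδ₂]; positivity
  -- the little-o property, in ε-δ form
  have hod : ∀ᶠ θ' in nhdsWithin θ Θ, ∀ s a,
      ‖π θ' s a - π θ s a - (inner ℝ (D θ s a) (θ' - θ) : ℝ)‖ ≤ c' * ‖θ' - θ‖ := by
    refine Filter.eventually_all.mpr fun s => Filter.eventually_all.mpr fun a => ?_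
    have hlo := hasGradientWithinAt_iff_isLittleO.mp (hD θ hθ s a)
    have := hlo.def hc'0
    simpa using this
  rw [eventually_nhdsWithin_iff, Metric.eventually_nhds_iff] at hod
  obtain ⟨δ₁, hδ₁0, hball⟩ := hod
  refine ⟨min δ₁ δ₂, lt_min hδ₁0 hδ₂0, ?_⟩
  intro h hne hlt hmem
  have hd1 : ‖h‖ < δ₁ := lt_of_lt_of_le hlt (min_le_left _ _)
  have hd2 : ‖h‖ < δ₂ := lt_of_lt_of_le hlt (min_le_right _ _)
  have hdist : dist (θ + h) θ < δ₁ := by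
    rw [dist_eq_norm, add_sub_cancel_left]; exact hd1
  have hsmall : ∀ s a, ‖π (θ + h) s a - π θ s a - (inner ℝ (D θ s a) h : ℝ)‖ ≤ c' * ‖h‖ := by
    have := hball hdist hmem
    simpa [add_sub_cancel_left] using this
  have hLip' : ∀ s a, |π (θ + h) s a - π θ s a| ≤ kπ * ‖h‖ := by
    have := hLip (θ + h) hmem
    simpa [add_sub_cancel_left] using this
  -- main players
  set G' : S → ℝ := Gval γ R (π (θ + h)) p c sθ with hG'def
  have hGfix : ∀ s, G' s = ∑ a, π (θ + h) s a * (c s a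
      + γ * (1 - R) * ∑ s', p s a s' * G' s' + γ * R * G' sθ) :=
    fun s => Gval_fixed γ R hγ hR (π (θ + h)) p c (hπ (θ + h) hmem) hp sθ s
  have hle : ∀ s, G' s ≤ V (θ + h) s :=
    frozen_le_robust γ R hγ hR (π (θ + h)) p c (hπ (θ + h) hmem) hp sθ
      (V (θ + h)) G' (hV (θ + h) hmem) hGfix
  set Z : S → ℝ := fun s => G' s - V θ s with hZ
  set Δ : S → ℝ := fun s => ∑ a, (π (θ + h) s a - π θ s a) * Q θ s a with hΔ
  set n : S → S → ℝ := fun x y => neumann (γ * (1 - R)) (pmat (π θ) p) x y with hn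
  set Kh : S → S → ℝ := fun x y => n x y + (γ * R / (1 - γ)) * n sθ y with hKh
  set Kb : S → ℝ := fun x => ∑ s', Kh x s' * Δ s' with hKb
  set Wf : S → ℝ := fun s => Z s - Kb s with hWf
  set κ : S → ℝ := fun s' => ∑ s₀, ρ s₀ * Kh s₀ s' with hκ
  -- elementary bounds
  have hKh0 : ∀ x y, 0 ≤ Kh x y := fun x y =>
    khat_nonneg γ R hγ hR (π θ) p (hπ θ hθ) hp sθ x y
  have hKhub : ∀ x y, Kh x y ≤ Qm := fun x y =>
    khat_le γ R hγ hR (π θ) p (hπ θ hθ) hp sθ x y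
  have hΔb : ∀ s, |Δ s| ≤ nA * (kπ * ‖h‖) * Qm := by
    intro s
    calc |Δ s| ≤ ∑ a, |(π (θ + h) s a - π θ s a) * Q θ s a| :=
          Finset.abs_sum_le_sum_abs _ _
      _ ≤ ∑ _a : A, kπ * ‖h‖ * Qm := by
          apply Finset.sum_le_sum; intro a _
          rw [abs_mul]
          exact mul_le_mul (hLip' s a) (hQub s a) (abs_nonneg _)
            (by positivity)
      _ = nA * (kπ * ‖h‖ * Qm) := by
          rw [Finset.sum_const, nsmul_eq_mul, Finset.card_univ, hnA]
      _ = nA * (kπ * ‖h‖) * Qm := by ring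
  have hKbb : ∀ x, |Kb x| ≤ nS * Qm * (nA * (kπ * ‖h‖) * Qm) := by
    intro x
    calc |Kb x| ≤ ∑ s', |Kh x s' * Δ s'| := Finset.abs_sum_le_sum_abs _ _
      _ ≤ ∑ _s' : S, Qm * (nA * (kπ * ‖h‖) * Qm) := by
          apply Finset.sum_le_sum; intro s' _
          rw [abs_mul, abs_of_nonneg (hKh0 x s')]
          exact mul_le_mul (hKhub x s') (hΔb s') (abs_nonneg _) hQm0.le
      _ = nS * (Qm * (nA * (kπ * ‖h‖) * Qm)) := by
          rw [Finset.sum_const, nsmul_eq_mul, Finset.card_univ, hnS]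
      _ = nS * Qm * (nA * (kπ * ‖h‖) * Qm) := by ring
  -- V θ as a fixed point expressed through Q
  have hVQ : ∀ s, V θ s = ∑ a, π θ s a * Q θ s a := by
    intro s
    rw [hV θ hθ s]
    apply Finset.sum_congr rfl; intro a _
    rw [hQ θ hθ s a]
  have hQd : ∀ s a, Q θ s a
      = c s a + γ * (1 - R) * ∑ s', p s a s' * V θ s' + γ * R * V θ sθ := by
    intro s a; rw [hQ θ hθ s a, hsup]
  -- E1 : the recursion for Z
  have hE1 : ∀ s, Z s = Δ s
      + γ * (1 - R) * ∑ a, π (θ + h) s a * ∑ s', p s a s' * Z s'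
      + γ * R * Z sθ := by
    intro s
    have hone : ∑ a, π (θ + h) s a = 1 := (hπ (θ + h) hmem s).2
    have hz : ∀ a, ∑ s', p s a s' * Z s'
        = (∑ s', p s a s' * G' s') - ∑ s', p s a s' * V θ s' := by
      intro a
      simp only [hZ]
      rw [← Finset.sum_sub_distrib]
      apply Finset.sum_congr rfl; intro s' _
      ring
    have expand : ∀ a, π (θ + h) s a * (c s a
          + γ * (1 - R) * ∑ s', p s a s' * G' s' + γ * R * G' sθ)
          - π θ s a * Q θ s a
        = (π (θ + h) s a - π θ s a) * Q θ s a
          + (γ * (1 - R) * (π (θ + h) s a * ∑ s', p s a s' * Z s')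
            + γ * R * (π (θ + h) s a * Z sθ)) := by
      intro a
      rw [hz a, hQd s a]
      simp only [hZ]
      ring
    calc Z s = ∑ a, (π (θ + h) s a * (c s a
          + γ * (1 - R) * ∑ s', p s a s' * G' s' + γ * R * G' sθ)
          - π θ s a * Q θ s a) := by
          simp only [hZ]
          rw [hGfix s, hVQ s, ← Finset.sum_sub_distrib]
      _ = ∑ a, ((π (θ + h) s a - π θ s a) * Q θ s a
          + (γ * (1 - R) * (π (θ + h) s a * ∑ s', p s a s' * Z s')
            + γ * R * (π (θ + h) s a * Z sθ))) :=
          Finset.sum_congr rfl fun a _ => expand a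
      _ = Δ s + (γ * (1 - R) * ∑ a, π (θ + h) s a * ∑ s', p s a s' * Z s'
            + γ * R * ∑ a, π (θ + h) s a * Z sθ) := by
          rw [Finset.sum_add_distrib, Finset.sum_add_distrib, ← Finset.mul_sum, ← Finset.mul_sum]
      _ = Δ s + γ * (1 - R) * ∑ a, π (θ + h) s a * ∑ s', p s a s' * Z s' + γ * R * Z sθ := by
          rw [← Finset.sum_mul, hone, one_mul]
          ring
  -- E2 : the recursion for Kb
  have hE2 : ∀ s, Kb s = Δ s
      + γ * (1 - R) * ∑ s'', pmat (π θ) p s s'' * Kb s''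
      + γ * R * Kb sθ := by
    intro s
    simp only [hKb, hKh, hn]
    exact kapp_eq γ R hγ hR (π θ) p (hπ θ hθ) hp Δ sθ s
  -- E3 : the recursion for Wf
  have hE3 : ∀ s, Wf s = γ * (1 - R) * ∑ s', pmat (π (θ + h)) p s s' * Wf s'
      + γ * R * Wf sθ
      + γ * (1 - R) * ∑ s', (pmat (π (θ + h)) p s s' - pmat (π θ) p s s') * Kb s' := by
    intro s
    have swap : ∀ (F : S → ℝ), ∑ a, π (θ + h) s a * ∑ s', p s a s' * F s'
        = ∑ s', pmat (π (θ + h)) p s s' * F s' := by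
      intro F
      unfold pmat
      simp only [Matrix.of_apply]
      rw [Finset.sum_congr rfl (fun s' (_ : s' ∈ univ) => Finset.sum_mul _ _ _),
        Finset.sum_comm]
      apply Finset.sum_congr rfl; intro a _
      rw [Finset.mul_sum]
      apply Finset.sum_congr rfl; intro s' _
      ring
    have e1 := hE1 s
    rw [swap Z] at e1
    have e2 := hE2 s
    have e3 : ∀ s', pmat (π (θ + h)) p s s' * Z s' - pmat (π θ) p s s' * Kb s'
        = pmat (π (θ + h)) p s s' * Wf s'
          + (pmat (π (θ + h)) p s s' - pmat (π θ) p s s') * Kb s' := by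
      intro s'; simp only [hWf]; ring
    calc Wf s = Z s - Kb s := by simp only [hWf]
      _ = γ * (1 - R) * (∑ s', pmat (π (θ + h)) p s s' * Z s'
            - ∑ s'', pmat (π θ) p s s'' * Kb s'')
          + γ * R * (Z sθ - Kb sθ) := by
          rw [e1, e2]; ring
      _ = γ * (1 - R) * ∑ s', (pmat (π (θ + h)) p s s' * Wf s'
            + (pmat (π (θ + h)) p s s' - pmat (π θ) p s s') * Kb s')
          + γ * R * Wf sθ := by
          rw [← Finset.sum_sub_distrib,
            Finset.sum_congr rfl (fun s' (_ : s' ∈ univ) => e3 s')]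
      _ = _ := by
          rw [Finset.sum_add_distrib, mul_add]
          ring
  -- bound on Wf
  obtain ⟨sW, -, hsW⟩ := Finset.exists_max_image Finset.univ (fun s => |Wf s|) univ_nonempty
  have hsW' : ∀ s, |Wf s| ≤ |Wf sW| := fun s => hsW s (Finset.mem_univ s)
  have hWmb : |Wf sW| ≤ C₂ * ‖h‖ ^ 2 := by
    have hP'0 := pmat_nonneg (π (θ + h)) p (hπ (θ + h) hmem) hp
    have hP'1 := pmat_rowsum (π (θ + h)) p (hπ (θ + h) hmem) hp
    have T1 : |∑ s', pmat (π (θ + h)) p sW s' * Wf s'| ≤ |Wf sW| := by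
      calc |∑ s', pmat (π (θ + h)) p sW s' * Wf s'|
          ≤ ∑ s', |pmat (π (θ + h)) p sW s' * Wf s'| := Finset.abs_sum_le_sum_abs _ _
        _ ≤ ∑ s', pmat (π (θ + h)) p sW s' * |Wf sW| := by
            apply Finset.sum_le_sum; intro s' _
            rw [abs_mul, abs_of_nonneg (hP'0 sW s')]
            exact mul_le_mul_of_nonneg_left (hsW' s') (hP'0 sW s')
        _ = |Wf sW| := by rw [← Finset.sum_mul, hP'1 sW, one_mul]
    have hPd : ∀ s', |pmat (π (θ + h)) p sW s' - pmat (π θ) p sW s'|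
        ≤ ∑ a, kπ * ‖h‖ * p sW a s' := by
      intro s'
      unfold pmat
      simp only [Matrix.of_apply]
      rw [← Finset.sum_sub_distrib]
      calc |∑ a, (π (θ + h) sW a * p sW a s' - π θ sW a * p sW a s')|
          ≤ ∑ a, |π (θ + h) sW a * p sW a s' - π θ sW a * p sW a s'| :=
            Finset.abs_sum_le_sum_abs _ _
        _ ≤ ∑ a, kπ * ‖h‖ * p sW a s' := by
            apply Finset.sum_le_sum; intro a _
            rw [← sub_mul, abs_mul, abs_of_nonneg ((hp sW a).1 s')]
            exact mul_le_mul_of_nonneg_right (hLip' sW a) ((hp sW a).1 s')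
    have hPdsum : ∑ s', ∑ a, kπ * ‖h‖ * p sW a s' = nA * (kπ * ‖h‖) := by
      rw [Finset.sum_comm]
      calc ∑ a, ∑ s', kπ * ‖h‖ * p sW a s' = ∑ a : A, kπ * ‖h‖ := by
            apply Finset.sum_congr rfl; intro a _
            rw [← Finset.mul_sum, (hp sW a).2, mul_one]
        _ = nA * (kπ * ‖h‖) := by
            rw [Finset.sum_const, nsmul_eq_mul, Finset.card_univ, hnA]
    have T3 : |∑ s', (pmat (π (θ + h)) p sW s' - pmat (π θ) p sW s') * Kb s'|
        ≤ nA * (kπ * ‖h‖) * (nS * Qm * (nA * (kπ * ‖h‖) * Qm)) := by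
      calc |∑ s', (pmat (π (θ + h)) p sW s' - pmat (π θ) p sW s') * Kb s'|
          ≤ ∑ s', |(pmat (π (θ + h)) p sW s' - pmat (π θ) p sW s') * Kb s'| :=
            Finset.abs_sum_le_sum_abs _ _
        _ ≤ ∑ s', (∑ a, kπ * ‖h‖ * p sW a s') * (nS * Qm * (nA * (kπ * ‖h‖) * Qm)) := by
            apply Finset.sum_le_sum; intro s' _
            rw [abs_mul]
            apply mul_le_mul (hPd s') (hKbb s') (abs_nonneg _)
            exact Finset.sum_nonneg fun a _ =>
              mul_nonneg (by positivity) ((hp sW a).1 s')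
        _ = (∑ s', ∑ a, kπ * ‖h‖ * p sW a s') * (nS * Qm * (nA * (kπ * ‖h‖) * Qm)) := by
            rw [Finset.sum_mul]
        _ = nA * (kπ * ‖h‖) * (nS * Qm * (nA * (kπ * ‖h‖) * Qm)) := by rw [hPdsum]
    have comb : |Wf sW| ≤ γ * |Wf sW|
        + nA * (kπ * ‖h‖) * (nS * Qm * (nA * (kπ * ‖h‖) * Qm)) := by
      have tri : |γ * (1 - R) * ∑ s', pmat (π (θ + h)) p sW s' * Wf s'
          + γ * R * Wf sθ
          + γ * (1 - R) * ∑ s', (pmat (π (θ + h)) p sW s' - pmat (π θ) p sW s') * Kb s'|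
          ≤ |γ * (1 - R) * ∑ s', pmat (π (θ + h)) p sW s' * Wf s'|
            + |γ * R * Wf sθ|
            + |γ * (1 - R) * ∑ s', (pmat (π (θ + h)) p sW s' - pmat (π θ) p sW s') * Kb s'| :=
        le_trans (abs_add_le _ _) (by gcongr; exact abs_add_le _ _)
      have b1 : |γ * (1 - R) * ∑ s', pmat (π (θ + h)) p sW s' * Wf s'|
          ≤ γ * (1 - R) * |Wf sW| := by
        rw [abs_mul, abs_of_nonneg hβ0]
        exact mul_le_mul_of_nonneg_left T1 hβ0
      have b2 : |γ * R * Wf sθ| ≤ γ * R * |Wf sW| := by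
        rw [abs_mul, abs_of_nonneg hγR]
        exact mul_le_mul_of_nonneg_left (hsW' sθ) hγR
      have b3 : |γ * (1 - R) * ∑ s', (pmat (π (θ + h)) p sW s' - pmat (π θ) p sW s') * Kb s'|
          ≤ nA * (kπ * ‖h‖) * (nS * Qm * (nA * (kπ * ‖h‖) * Qm)) := by
        rw [abs_mul, abs_of_nonneg hβ0]
        calc γ * (1 - R) * |∑ s', (pmat (π (θ + h)) p sW s' - pmat (π θ) p sW s') * Kb s'|
            ≤ 1 * (nA * (kπ * ‖h‖) * (nS * Qm * (nA * (kπ * ‖h‖) * Qm))) :=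
              mul_le_mul hβ1.le T3 (abs_nonneg _) zero_le_one
          _ = nA * (kπ * ‖h‖) * (nS * Qm * (nA * (kπ * ‖h‖) * Qm)) := one_mul _
      have habs : |Wf sW| ≤ |γ * (1 - R) * ∑ s', pmat (π (θ + h)) p sW s' * Wf s'|
            + |γ * R * Wf sθ|
            + |γ * (1 - R) * ∑ s', (pmat (π (θ + h)) p sW s' - pmat (π θ) p sW s') * Kb s'| := by
        rw [hE3 sW]
        exact tri
      have hsumeq : γ * (1 - R) * |Wf sW| + γ * R * |Wf sW| = γ * |Wf sW| := by ring
      linarith [habs, b1, b2, b3]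
    have hB : nA * (kπ * ‖h‖) * (nS * Qm * (nA * (kπ * ‖h‖) * Qm))
        = (nA * kπ * (nS * Qm * (nA * kπ * Qm))) * ‖h‖ ^ 2 := by ring
    have step : |Wf sW| ≤ nA * kπ * (nS * Qm * (nA * kπ * Qm)) * ‖h‖ ^ 2 / (1 - γ) := by
      rw [le_div_iff₀ h1γ]
      nlinarith [comb, hB]
    calc |Wf sW| ≤ nA * kπ * (nS * Qm * (nA * kπ * Qm)) * ‖h‖ ^ 2 / (1 - γ) := step
      _ = (nA * kπ * (nS * Qm * (nA * kπ * Qm)) / (1 - γ)) * ‖h‖ ^ 2 := by ring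
      _ ≤ C₂ * ‖h‖ ^ 2 := by
          apply mul_le_mul_of_nonneg_right _ (sq_nonneg _)
          rw [hC₂]
          linarith [sq_nonneg ‖h‖]
  -- the ψ computation (Lemma C)
  have hψ : (inner ℝ h ((γ * R / ((1 - γ) * (1 - γ + γ * R))) •
          ∑ s, ∑ a, (dvisit γ R (π θ) p sθ s * Q θ s a) • D θ s a
        + (1 / (1 - γ + γ * R)) •
          ∑ s, ∑ a, ((∑ s₀, ρ s₀ * dvisit γ R (π θ) p s₀ s) * Q θ s a) • D θ s a) : ℝ)
      = ∑ s', κ s' * ∑ a, Q θ s' a * (inner ℝ h (D θ s' a) : ℝ) := by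
    have hdv : ∀ x y, dvisit γ R (π θ) p x y = (1 - γ + γ * R) * n x y := by
      intro x y; simp only [hn]; rfl
    rw [inner_add_right, real_inner_smul_right, real_inner_smul_right]
    simp only [inner_sum, real_inner_smul_right]
    rw [Finset.mul_sum, Finset.mul_sum, ← Finset.sum_add_distrib]
    apply Finset.sum_congr rfl; intro s' _
    have hκe : κ s' = (∑ s₀, ρ s₀ * n s₀ s') + γ * R / (1 - γ) * n sθ s' := by
      simp only [hκ, hKh]
      rw [Finset.sum_congr rfl (fun s₀ (_ : s₀ ∈ univ) => mul_add (ρ s₀) _ _),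
        Finset.sum_add_distrib]
      congr 1
      rw [← Finset.sum_mul, hρ.2, one_mul]
    have id1 : γ * R / ((1 - γ) * (1 - γ + γ * R)) * dvisit γ R (π θ) p sθ s'
        = γ * R / (1 - γ) * n sθ s' := by
      rw [hdv]
      field_simp
    have id2 : 1 / (1 - γ + γ * R) * (∑ s₀, ρ s₀ * dvisit γ R (π θ) p s₀ s')
        = ∑ s₀, ρ s₀ * n s₀ s' := by
      rw [Finset.sum_congr rfl (fun s₀ (_ : s₀ ∈ univ) => by rw [hdv s₀ s'])]
      rw [Finset.mul_sum]
      apply Finset.sum_congr rfl; intro s₀ _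
      field_simp
    rw [hκe]
    rw [Finset.mul_sum, Finset.mul_sum, Finset.mul_sum, ← Finset.sum_add_distrib]
    apply Finset.sum_congr rfl; intro a _
    linear_combination (Q θ s' a * (inner ℝ h (D θ s' a) : ℝ)) * id1
      + (Q θ s' a * (inner ℝ h (D θ s' a) : ℝ)) * id2
  -- splitting the ρ-average of Z
  have hsplit : ∑ s, ρ s * Z s = ∑ s', κ s' * Δ s' + ∑ s, ρ s * Wf s := by
    have e1 : ∀ s : S, ρ s * Z s = ρ s * Kb s + ρ s * Wf s := by
      intro s; simp only [hWf]; ring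
    rw [Finset.sum_congr rfl (fun s (_ : s ∈ univ) => e1 s), Finset.sum_add_distrib]
    congr 1
    simp only [hKb, hκ]
    rw [Finset.sum_congr rfl (fun s₀ (_ : s₀ ∈ univ) => Finset.mul_sum _ _ _), Finset.sum_comm]
    apply Finset.sum_congr rfl; intro s' _
    rw [Finset.sum_mul]
    apply Finset.sum_congr rfl; intro s₀ _
    ring
  -- bound on the remainder term
  have hκ0 : ∀ s', 0 ≤ κ s' := fun s' =>
    Finset.sum_nonneg fun s₀ _ => mul_nonneg (hρ.1 s₀) (hKh0 s₀ s')
  have hκub : ∀ s', κ s' ≤ Qm := by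
    intro s'
    calc κ s' ≤ ∑ s₀, ρ s₀ * Qm := by
          apply Finset.sum_le_sum; intro s₀ _
          exact mul_le_mul_of_nonneg_left (hKhub s₀ s') (hρ.1 s₀)
      _ = Qm := by rw [← Finset.sum_mul, hρ.2, one_mul]
  have hrb : |∑ s', κ s' * Δ s' - ∑ s', κ s' * ∑ a, Q θ s' a * (inner ℝ h (D θ s' a) : ℝ)|
      ≤ nS * Qm * (nA * Qm * (c' * ‖h‖)) := by
    have hdiff : ∀ s', |Δ s' - ∑ a, Q θ s' a * (inner ℝ h (D θ s' a) : ℝ)|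
        ≤ nA * Qm * (c' * ‖h‖) := by
      intro s'
      have e : Δ s' - ∑ a, Q θ s' a * (inner ℝ h (D θ s' a) : ℝ)
          = ∑ a, (π (θ + h) s' a - π θ s' a - (inner ℝ (D θ s' a) h : ℝ)) * Q θ s' a := by
        simp only [hΔ]
        rw [← Finset.sum_sub_distrib]
        apply Finset.sum_congr rfl; intro a _
        rw [real_inner_comm]
        ring
      rw [e]
      calc |∑ a, (π (θ + h) s' a - π θ s' a - (inner ℝ (D θ s' a) h : ℝ)) * Q θ s' a|
          ≤ ∑ a, |(π (θ + h) s' a - π θ s' a - (inner ℝ (D θ s' a) h : ℝ)) * Q θ s' a| :=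
            Finset.abs_sum_le_sum_abs _ _
        _ ≤ ∑ _a : A, (c' * ‖h‖) * Qm := by
            apply Finset.sum_le_sum; intro a _
            rw [abs_mul]
            apply mul_le_mul _ (hQub s' a) (abs_nonneg _) (by positivity)
            have := hsmall s' a
            rwa [Real.norm_eq_abs] at this
        _ = nA * ((c' * ‖h‖) * Qm) := by
            rw [Finset.sum_const, nsmul_eq_mul, Finset.card_univ, hnA]
        _ = nA * Qm * (c' * ‖h‖) := by ring
    calc |∑ s', κ s' * Δ s' - ∑ s', κ s' * ∑ a, Q θ s' a * (inner ℝ h (D θ s' a) : ℝ)|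
        = |∑ s', κ s' * (Δ s' - ∑ a, Q θ s' a * (inner ℝ h (D θ s' a) : ℝ))| := by
          rw [← Finset.sum_sub_distrib]
          congr 1
          apply Finset.sum_congr rfl; intro s' _
          ring
      _ ≤ ∑ s', |κ s' * (Δ s' - ∑ a, Q θ s' a * (inner ℝ h (D θ s' a) : ℝ))| :=
          Finset.abs_sum_le_sum_abs _ _
      _ ≤ ∑ _s' : S, Qm * (nA * Qm * (c' * ‖h‖)) := by
          apply Finset.sum_le_sum; intro s' _
          rw [abs_mul, abs_of_nonneg (hκ0 s')]
          exact mul_le_mul (hκub s') (hdiff s') (abs_nonneg _) hQm0.le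
      _ = nS * (Qm * (nA * Qm * (c' * ‖h‖))) := by
          rw [Finset.sum_const, nsmul_eq_mul, Finset.card_univ, hnS]
      _ = nS * Qm * (nA * Qm * (c' * ‖h‖)) := by ring
  -- final assembly
  have step1 : ∑ s, ρ s * Z s ≤ ∑ s, ρ s * V (θ + h) s - ∑ s, ρ s * V θ s := by
    rw [← Finset.sum_sub_distrib]
    apply Finset.sum_le_sum; intro s _
    simp only [hZ]
    rw [← mul_sub]
    exact mul_le_mul_of_nonneg_left (by linarith [hle s]) (hρ.1 s)
  have hWsum : |∑ s, ρ s * Wf s| ≤ C₂ * ‖h‖ ^ 2 := by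
    calc |∑ s, ρ s * Wf s| ≤ ∑ s, |ρ s * Wf s| := Finset.abs_sum_le_sum_abs _ _
      _ ≤ ∑ s, ρ s * (C₂ * ‖h‖ ^ 2) := by
          apply Finset.sum_le_sum; intro s _
          rw [abs_mul, abs_of_nonneg (hρ.1 s)]
          exact mul_le_mul_of_nonneg_left (le_trans (hsW' s) hWmb) (hρ.1 s)
      _ = C₂ * ‖h‖ ^ 2 := by rw [← Finset.sum_mul, hρ.2, one_mul]
  have hnorm0 : 0 < ‖h‖ := norm_pos_iff.mpr hne
  have bound1 : nS * Qm * (nA * Qm * (c' * ‖h‖)) ≤ ε / 2 * ‖h‖ := by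
    have hd : (0:ℝ) < 2 * (nS * Qm * nA * Qm) + 1 := by positivity
    have hX0 : (0:ℝ) ≤ nS * Qm * nA * Qm := by positivity
    have key : nS * Qm * (nA * Qm * c') ≤ ε / 2 := by
      rw [hc']
      have e : nS * Qm * (nA * Qm * (ε / (2 * (nS * Qm * nA * Qm) + 1)))
          = (nS * Qm * nA * Qm) * ε / (2 * (nS * Qm * nA * Qm) + 1) := by ring
      rw [e, div_le_iff₀ hd]
      nlinarith [hε, hX0]
    calc nS * Qm * (nA * Qm * (c' * ‖h‖)) = (nS * Qm * (nA * Qm * c')) * ‖h‖ := by ring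
      _ ≤ ε / 2 * ‖h‖ := mul_le_mul_of_nonneg_right key hnorm0.le
  have bound2 : C₂ * ‖h‖ ^ 2 ≤ ε / 2 * ‖h‖ := by
    have : C₂ * ‖h‖ ≤ ε / 2 := by
      rw [hδ₂] at hd2
      rw [mul_comm, ← le_div_iff₀ hC₂0]
      calc ‖h‖ ≤ ε / (2 * C₂) := hd2.le
        _ = ε / 2 / C₂ := by rw [div_div]
    calc C₂ * ‖h‖ ^ 2 = C₂ * ‖h‖ * ‖h‖ := by ring
      _ ≤ ε / 2 * ‖h‖ := mul_le_mul_of_nonneg_right this hnorm0.le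
  have habs1 := abs_le.mp hrb
  have habs2 := abs_le.mp hWsum
  show -ε * ‖h‖ ≤ (∑ s, ρ s * V (θ + h) s) - (∑ s, ρ s * V θ s) - (inner ℝ h _ : ℝ)
  rw [hψ]
  have key0 : ∑ s' : S, κ s' * Δ s' - ∑ s' : S, κ s' * ∑ a : A, Q θ s' a * (inner ℝ h (D θ s' a) : ℝ)
      ≥ -(ε / 2 * ‖h‖) := le_trans (neg_le_neg bound1) habs1.1
  have key1 : ∑ s : S, ρ s * Wf s ≥ -(ε / 2 * ‖h‖) := le_trans (neg_le_neg bound2) habs2.1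
  have key2 : ∑ s : S, ρ s * Z s
      - ∑ s' : S, κ s' * ∑ a : A, Q θ s' a * (inner ℝ h (D θ s' a) : ℝ)
      ≥ -(ε / 2 * ‖h‖) - ε / 2 * ‖h‖ := by linarith [hsplit]
  linarith [step1]
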